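/- Let n ≥ 1 and 0 < θ ≤ π. Then every unit-ball packing in ℝ^n has upper density at most sin^n(θ/2) · A(n+1,θ). -/

import Mathlib

open MeasureTheory Metric Real
open scoped BigOperators ENNReal

/-- `A(n,θ)`: the maximum size of a spherical code in the unit sphere of `ℝ^n`
with minimal angle `θ`. -/
noncomputable def sphericalCodeMax (n : ℕ) (θ : ℝ) : ℕ :=
  sSup {N : ℕ | ∃ C : Finset (EuclideanSpace ℝ (Fin n)), C.card = N ∧
    (∀ x ∈ C, ‖x‖ = 1) ∧
    (∀ x ∈ C, ∀ y ∈ C, x ≠ y → (inner ℝ x y : ℝ) ≤ Real.cos θ)}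

/-- The upper density of the packing of unit balls centered at the points of `P`. -/
noncomputable def packingUpperDensity (n : ℕ) (P : Set (EuclideanSpace ℝ (Fin n))) : ℝ≥0∞ :=
  Filter.limsup (fun R : ℝ =>
    volume ((⋃ x ∈ P, closedBall x 1) ∩ closedBall (0 : EuclideanSpace ℝ (Fin n)) R) /
      volume (closedBall (0 : EuclideanSpace ℝ (Fin n)) R)) Filter.atTop

section Aux
open Finset

lemma inner_eucl {m : ℕ} (x y : EuclideanSpace ℝ (Fin m)) : (inner ℝ x y : ℝ) = ∑ i, x i * y i := by
  simp [PiLp.inner_apply]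
  exact Finset.sum_congr rfl (fun i _ => mul_comm _ _)

lemma sumsq_eucl {m : ℕ} (v : EuclideanSpace ℝ (Fin m)) : ∑ i, (v i)^2 = ‖v‖^2 := by
  rw [EuclideanSpace.norm_eq, Real.sq_sqrt (by positivity)]
  simp [sq_abs]

lemma code_bddAbove (m : ℕ) {θ : ℝ} (hcos : Real.cos θ < 1) :
    BddAbove {N : ℕ | ∃ C : Finset (EuclideanSpace ℝ (Fin m)), C.card = N ∧
      (∀ x ∈ C, ‖x‖ = 1) ∧
      (∀ x ∈ C, ∀ y ∈ C, x ≠ y → (inner ℝ x y : ℝ) ≤ Real.cos θ)} := by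
  classical
  set F := EuclideanSpace ℝ (Fin m)
  set δ : ℝ := Real.sqrt (2 - 2 * Real.cos θ) with hδdef
  have hδ : 0 < δ := Real.sqrt_pos.2 (by linarith)
  have hcover : closedBall (0 : F) 1 ⊆ ⋃ i : F, ball i (δ/2) := by
    intro x _; exact Set.mem_iUnion.2 ⟨x, mem_ball_self (by linarith)⟩
  obtain ⟨t, ht⟩ := (isCompact_closedBall (0 : F) 1).elim_finite_subcover
    (fun i : F => ball i (δ/2)) (fun i => isOpen_ball) hcover
  refine ⟨t.card, fun N hN => ?_⟩
  obtain ⟨C, rfl, hnorm, hinner⟩ := hN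
  by_contra hlt
  push_neg at hlt
  have hmap : ∀ x ∈ C, ∃ i ∈ t, x ∈ ball i (δ/2) := by
    intro x hx
    have : x ∈ ⋃ i ∈ t, ball i (δ/2) := ht (by simp [mem_closedBall, hnorm x hx, dist_zero_right, (hnorm x hx).le])
    simpa using this
  set f : F → F := fun x => if h : ∃ i ∈ t, x ∈ ball i (δ/2) then h.choose else x with hf
  have hft : ∀ x ∈ C, f x ∈ t ∧ x ∈ ball (f x) (δ/2) := by
    intro x hx
    have h := hmap x hx
    simp only [hf, dif_pos h]
    exact ⟨h.choose_spec.1, h.choose_spec.2⟩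
  obtain ⟨x, hx, y, hy, hne, hfe⟩ := Finset.exists_ne_map_eq_of_card_lt_of_maps_to hlt
    (fun x hx => (hft x hx).1)
  have hd1 : dist x y < δ := by
    have h1 := (hft x hx).2
    have h2 := (hft y hy).2
    rw [hfe] at h1
    calc dist x y ≤ dist x (f y) + dist (f y) y := dist_triangle _ _ _
    _ < δ/2 + δ/2 := by
        rw [mem_ball] at h1 h2
        rw [dist_comm (f y) y]; linarith
    _ = δ := by ring
  have hd2 : δ ≤ dist x y := by
    have hsq : δ^2 ≤ dist x y ^ 2 := by
      have h1 : dist x y ^2 = ‖x - y‖^2 := by rw [dist_eq_norm]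
      have h2 : ‖x - y‖^2 = ‖x‖^2 - 2 * (inner ℝ x y : ℝ) + ‖y‖^2 := norm_sub_sq_real x y
      have h3 : (inner ℝ x y : ℝ) ≤ Real.cos θ := hinner x hx y hy hne
      have h4 : δ^2 = 2 - 2*Real.cos θ := Real.sq_sqrt (by linarith)
      rw [h1, h2, hnorm x hx, hnorm y hy, h4]; nlinarith
    calc δ = Real.sqrt (δ^2) := (Real.sqrt_sq hδ.le).symm
    _ ≤ Real.sqrt (dist x y ^2) := Real.sqrt_le_sqrt hsq
    _ = dist x y := Real.sqrt_sq dist_nonneg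
  linarith

lemma lift_card_le (n : ℕ) {θ : ℝ} (hθ1 : 0 < θ) (hθ2 : θ ≤ π)
    (c : EuclideanSpace ℝ (Fin n)) (S : Finset (EuclideanSpace ℝ (Fin n)))
    (hS : ∀ x ∈ S, dist x c ≤ 1 / Real.sin (θ/2))
    (hsep : ∀ x ∈ S, ∀ y ∈ S, x ≠ y → 2 ≤ dist x y) :
    S.card ≤ sphericalCodeMax (n+1) θ := by
  classical
  have hsh : 0 < Real.sin (θ/2) :=
    Real.sin_pos_of_pos_of_lt_pi (by linarith) (by linarith [Real.pi_pos])
  set r : ℝ := 1 / Real.sin (θ/2) with hrdef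
  have hr : 0 < r := by positivity
  have hcos : Real.cos θ = 1 - 2 * Real.sin (θ/2)^2 := by
    have h1 := Real.cos_two_mul (θ/2)
    have h2 := Real.cos_sq' (θ/2)
    rw [show 2 * (θ/2) = θ by ring] at h1
    rw [h1, h2]; ring
  have hcos1 : Real.cos θ < 1 := by nlinarith
  -- radius bound in squared form
  have hball : ∀ x ∈ S, ‖x - c‖^2 ≤ r^2 := by
    intro x hx
    have := hS x hx
    rw [dist_eq_norm] at this
    nlinarith [norm_nonneg (x - c)]
  set s : EuclideanSpace ℝ (Fin n) → ℝ := fun x => Real.sqrt (r^2 - ‖x - c‖^2) with hsdef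
  have hs_sq : ∀ x ∈ S, (s x)^2 = r^2 - ‖x - c‖^2 := by
    intro x hx; exact Real.sq_sqrt (by linarith [hball x hx])
  set φ : EuclideanSpace ℝ (Fin n) → EuclideanSpace ℝ (Fin (n+1)) :=
    fun x => (WithLp.equiv 2 (Fin (n+1) → ℝ)).symm
      (Fin.snoc (fun i => (x - c) i / r) (s x / r)) with hφdef
  have hφapp : ∀ x (i : Fin (n+1)), φ x i =
      (Fin.snoc (fun i => (x - c) i / r) (s x / r) : Fin (n+1) → ℝ) i := by
    intro x i; rfl
  -- sum formula for inner products of lifts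
  have hinner_lift : ∀ x ∈ S, ∀ y ∈ S, (inner ℝ (φ x) (φ y) : ℝ) =
      ((inner ℝ (x - c) (y - c) : ℝ) + s x * s y) / r^2 := by
    intro x hx y hy
    rw [inner_eucl]
    have : ∀ i : Fin (n+1), φ x i * φ y i =
        (Fin.snoc (fun i => (x - c) i * (y - c) i) (s x * s y) : Fin (n+1) → ℝ) i / r^2 := by
      intro i
      rw [hφapp, hφapp]
      refine Fin.lastCases ?_ (fun j => ?_) i
      · simp [Fin.snoc_last]; ring
      · simp [Fin.snoc_castSucc]; ring
    rw [Finset.sum_congr rfl (fun i _ => this i), ← Finset.sum_div]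
    rw [Fin.sum_univ_castSucc]
    simp only [Fin.snoc_castSucc, Fin.snoc_last]
    rw [inner_eucl]
  -- norms of lifts
  have hnorm_lift : ∀ x ∈ S, ‖φ x‖ = 1 := by
    intro x hx
    have h1 : ‖φ x‖^2 = ∑ i, (φ x i)^2 := (sumsq_eucl (φ x)).symm
    have h2 : ∑ i : Fin (n+1), (φ x i)^2 = (‖x - c‖^2 + (s x)^2) / r^2 := by
      have : ∀ i : Fin (n+1), (φ x i)^2 =
          (Fin.snoc (fun i => ((x - c) i)^2) ((s x)^2) : Fin (n+1) → ℝ) i / r^2 := by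
        intro i
        rw [hφapp]
        refine Fin.lastCases ?_ (fun j => ?_) i
        · simp [Fin.snoc_last]; ring
        · simp [Fin.snoc_castSucc]; ring
      rw [Finset.sum_congr rfl (fun i _ => this i), ← Finset.sum_div, Fin.sum_univ_castSucc]
      simp only [Fin.snoc_castSucc, Fin.snoc_last]
      rw [sumsq_eucl]
    have h3 : ‖φ x‖^2 = 1 := by
      rw [h1, h2, hs_sq x hx]
      field_simp
      ring
    nlinarith [norm_nonneg (φ x)]
  -- inner product bound
  have hinner_le : ∀ x ∈ S, ∀ y ∈ S, x ≠ y → (inner ℝ (φ x) (φ y) : ℝ) ≤ Real.cos θ := by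
    intro x hx y hy hne
    rw [hinner_lift x hx y hy]
    have hxy : 2 ≤ ‖x - y‖ := by rw [← dist_eq_norm]; exact hsep x hx y hy hne
    have hip : (inner ℝ (x - c) (y - c) : ℝ) = (‖x - c‖^2 + ‖y - c‖^2 - ‖x - y‖^2)/2 := by
      have h := norm_sub_sq_real (x - c) (y - c)
      rw [sub_sub_sub_cancel_right] at h
      linarith
    have hss : s x * s y ≤ ((r^2 - ‖x - c‖^2) + (r^2 - ‖y - c‖^2))/2 := by
      have hA : (0:ℝ) ≤ r^2 - ‖x - c‖^2 := by linarith [hball x hx]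
      have hB : (0:ℝ) ≤ r^2 - ‖y - c‖^2 := by linarith [hball y hy]
      rw [hsdef]
      calc Real.sqrt (r^2 - ‖x - c‖^2) * Real.sqrt (r^2 - ‖y - c‖^2)
          = Real.sqrt ((r^2 - ‖x - c‖^2) * (r^2 - ‖y - c‖^2)) := (Real.sqrt_mul hA _).symm
        _ ≤ Real.sqrt ((((r^2 - ‖x - c‖^2) + (r^2 - ‖y - c‖^2))/2)^2) :=
            Real.sqrt_le_sqrt (by nlinarith [sq_nonneg ((r^2 - ‖x - c‖^2) - (r^2 - ‖y - c‖^2))])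
        _ = ((r^2 - ‖x - c‖^2) + (r^2 - ‖y - c‖^2))/2 := Real.sqrt_sq (by linarith)
    have hnum : (inner ℝ (x - c) (y - c) : ℝ) + s x * s y ≤ r^2 - 2 := by
      rw [hip]; nlinarith
    have hc : Real.cos θ = (r^2 - 2)/r^2 := by
      rw [hcos, hrdef]
      field_simp
    rw [hc]
    exact div_le_div_of_nonneg_right hnum (by positivity) |>.trans_eq rfl
  -- injectivity on S
  have hinj : Set.InjOn φ S := by
    intro x hx y hy heq
    by_contra hne
    have h1 := hinner_le x hx y hy hne
    rw [heq, real_inner_self_eq_norm_sq, hnorm_lift y hy] at h1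
    nlinarith
  have hcard : (S.image φ).card = S.card := Finset.card_image_of_injOn hinj
  have hmem : S.card ∈ {N : ℕ | ∃ C : Finset (EuclideanSpace ℝ (Fin (n+1))), C.card = N ∧
      (∀ x ∈ C, ‖x‖ = 1) ∧
      (∀ x ∈ C, ∀ y ∈ C, x ≠ y → (inner ℝ x y : ℝ) ≤ Real.cos θ)} := by
    refine ⟨S.image φ, hcard, ?_, ?_⟩
    · intro z hz
      obtain ⟨x, hx, rfl⟩ := Finset.mem_image.1 hz
      exact hnorm_lift x hx
    · intro z hz w hw hzw
      obtain ⟨x, hx, rfl⟩ := Finset.mem_image.1 hz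
      obtain ⟨y, hy, rfl⟩ := Finset.mem_image.1 hw
      exact hinner_le x hx y hy (fun h => hzw (by rw [h]))
  exact le_csSup (code_bddAbove (n+1) hcos1) hmem

lemma count_bound (n : ℕ) {θ : ℝ} (hθ1 : 0 < θ) (hθ2 : θ ≤ π)
    {ρ : ℝ} (S : Finset (EuclideanSpace ℝ (Fin n)))
    (hsep : ∀ x ∈ S, ∀ y ∈ S, x ≠ y → 2 ≤ dist x y)
    (hSρ : ∀ x ∈ S, dist x (0 : EuclideanSpace ℝ (Fin n)) ≤ ρ) :
    (S.card : ℝ≥0∞) * volume (closedBall (0 : EuclideanSpace ℝ (Fin n)) (1 / Real.sin (θ/2))) ≤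
      (sphericalCodeMax (n+1) θ : ℝ≥0∞) *
        volume (closedBall (0 : EuclideanSpace ℝ (Fin n)) (ρ + 1 / Real.sin (θ/2))) := by
  classical
  set r : ℝ := 1 / Real.sin (θ/2) with hrdef
  set A := sphericalCodeMax (n+1) θ with hAdef
  have key : ∀ y : EuclideanSpace ℝ (Fin n), (∑ x ∈ S, (closedBall x r).indicator (1 : EuclideanSpace ℝ (Fin n) → ℝ≥0∞) y) ≤
      (A : ℝ≥0∞) * (closedBall (0:EuclideanSpace ℝ (Fin n)) (ρ + r)).indicator (1 : EuclideanSpace ℝ (Fin n) → ℝ≥0∞) y := by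
    intro y
    set T := S.filter (fun x => y ∈ closedBall x r) with hTdef
    have hsum : (∑ x ∈ S, (closedBall x r).indicator (1 : EuclideanSpace ℝ (Fin n) → ℝ≥0∞) y) = T.card := by
      rw [hTdef, Finset.card_filter]
      push_cast
      refine Finset.sum_congr rfl fun x _ => ?_
      by_cases h : y ∈ closedBall x r <;> simp [Set.indicator_apply, h]
    rw [hsum]
    rcases Finset.eq_empty_or_nonempty T with hT | hT
    · simp [hT]
    · obtain ⟨x0, hx0⟩ := hT
      have hx0S : x0 ∈ S := (Finset.mem_filter.1 hx0).1
      have hx0y : dist y x0 ≤ r := by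
        have := (Finset.mem_filter.1 hx0).2; rwa [mem_closedBall] at this
      have hy : y ∈ closedBall (0:EuclideanSpace ℝ (Fin n)) (ρ + r) := by
        rw [mem_closedBall]
        calc dist y 0 ≤ dist y x0 + dist x0 0 := dist_triangle _ _ _
          _ ≤ r + ρ := add_le_add hx0y (hSρ x0 hx0S)
          _ = ρ + r := by ring
      have hTA : T.card ≤ A := by
        refine lift_card_le n hθ1 hθ2 y T (fun x hx => ?_) (fun x hx y' hy' => hsep x
          (Finset.mem_filter.1 hx).1 y' (Finset.mem_filter.1 hy').1)
        have := (Finset.mem_filter.1 hx).2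
        rw [mem_closedBall] at this
        rw [dist_comm]; exact this
      have : (closedBall (0:EuclideanSpace ℝ (Fin n)) (ρ + r)).indicator (1 : EuclideanSpace ℝ (Fin n) → ℝ≥0∞) y = 1 := by
        simp [Set.indicator_apply, hy]
      rw [this, mul_one]
      exact_mod_cast Nat.cast_le.2 hTA
  have hmeas : ∀ x : EuclideanSpace ℝ (Fin n), Measurable ((closedBall x r).indicator (1 : EuclideanSpace ℝ (Fin n) → ℝ≥0∞)) :=
    fun x => measurable_const.indicator measurableSet_closedBall
  have hsum_vol : (∑ x ∈ S, volume (closedBall x r)) ≤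
      (A : ℝ≥0∞) * volume (closedBall (0:EuclideanSpace ℝ (Fin n)) (ρ + r)) := by
    calc (∑ x ∈ S, volume (closedBall x r))
        = ∑ x ∈ S, ∫⁻ y, (closedBall x r).indicator (1 : EuclideanSpace ℝ (Fin n) → ℝ≥0∞) y := by
          refine Finset.sum_congr rfl fun x _ => ?_
          rw [lintegral_indicator_one measurableSet_closedBall]
      _ = ∫⁻ (y : EuclideanSpace ℝ (Fin n)), ∑ x ∈ S, (closedBall x r).indicator (1 : EuclideanSpace ℝ (Fin n) → ℝ≥0∞) y := by
          rw [lintegral_finset_sum _ (fun x _ => hmeas x)]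
      _ ≤ ∫⁻ y, (A : ℝ≥0∞) * (closedBall (0:EuclideanSpace ℝ (Fin n)) (ρ + r)).indicator (1 : EuclideanSpace ℝ (Fin n) → ℝ≥0∞) y :=
          lintegral_mono key
      _ = (A : ℝ≥0∞) * ∫⁻ (y : EuclideanSpace ℝ (Fin n)),
            (closedBall (0:EuclideanSpace ℝ (Fin n)) (ρ + r)).indicator 1 y :=
          lintegral_const_mul _ (measurable_const.indicator measurableSet_closedBall)
      _ = (A : ℝ≥0∞) * volume (closedBall (0:EuclideanSpace ℝ (Fin n)) (ρ + r)) := by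
          rw [lintegral_indicator_one measurableSet_closedBall]
  have hcenter : ∀ x : EuclideanSpace ℝ (Fin n), volume (closedBall x r) = volume (closedBall (0:EuclideanSpace ℝ (Fin n)) r) :=
    fun x => Measure.addHaar_closedBall_center volume x _
  calc (S.card : ℝ≥0∞) * volume (closedBall (0:EuclideanSpace ℝ (Fin n)) r)
      = ∑ x ∈ S, volume (closedBall x r) := by
        rw [Finset.sum_congr rfl (fun x _ => hcenter x), Finset.sum_const, nsmul_eq_mul]
    _ ≤ _ := hsum_vol

variable (n : ℕ)

-- finiteness of P within a ball
lemma P_inter_finite {θ : ℝ} (hθ1 : 0 < θ) (hθ2 : θ ≤ π)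
    (P : Set (EuclideanSpace ℝ (Fin n)))
    (hP : ∀ x ∈ P, ∀ y ∈ P, x ≠ y → 2 ≤ dist x y) (ρ : ℝ) :
    (P ∩ closedBall (0 : EuclideanSpace ℝ (Fin n)) ρ).Finite := by
  classical
  set r : ℝ := 1 / Real.sin (θ/2) with hrdef
  have hsh : 0 < Real.sin (θ/2) :=
    Real.sin_pos_of_pos_of_lt_pi (by linarith) (by linarith [Real.pi_pos])
  have hr : 0 < r := by positivity
  set vr := volume (closedBall (0 : EuclideanSpace ℝ (Fin n)) r) with hvr
  have hvr0 : vr ≠ 0 := by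
    refine (measure_ball_pos volume _ hr).trans_le (measure_mono ball_subset_closedBall) |>.ne'
  have hvrt : vr ≠ ⊤ := measure_closedBall_lt_top.ne
  set m := (sphericalCodeMax (n+1) θ : ℝ≥0∞) *
    volume (closedBall (0 : EuclideanSpace ℝ (Fin n)) (ρ + r)) / vr with hm
  have hmt : m ≠ ⊤ := by
    refine (ENNReal.div_lt_top ?_ hvr0).ne
    exact ENNReal.mul_ne_top (ENNReal.natCast_ne_top _) measure_closedBall_lt_top.ne
  by_contra hinf
  rw [← Set.Infinite] at hinf
  set N0 := ⌈m.toReal⌉₊ with hN0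
  obtain ⟨S, hSsub, hScard⟩ := hinf.exists_subset_card_eq (N0 + 1)
  have hbound : (S.card : ℝ≥0∞) ≤ m := by
    rw [hm, ENNReal.le_div_iff_mul_le (Or.inl hvr0) (Or.inl hvrt)]
    exact count_bound n hθ1 hθ2 S
      (fun x hx y hy => hP x (hSsub hx).1 y (hSsub hy).1)
      (fun x hx => (mem_closedBall.1 (hSsub hx).2))
  have h1 : ((N0 + 1 : ℕ) : ℝ) ≤ m.toReal := by
    rw [← hScard]
    have := ENNReal.toReal_mono hmt hbound
    simpa using this
  have h2 : m.toReal ≤ (N0 : ℝ) := Nat.le_ceil m.toReal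
  push_cast at h1
  linarith

end Aux

theorem packing_density_le_sin_pow_mul_codeMax_succ
    (n : ℕ) (hn : 1 ≤ n) (θ : ℝ) (hθ1 : 0 < θ) (hθ2 : θ ≤ π)
    (P : Set (EuclideanSpace ℝ (Fin n)))
    (hP : ∀ x ∈ P, ∀ y ∈ P, x ≠ y → 2 ≤ dist x y) :
    packingUpperDensity n P ≤
      ENNReal.ofReal (Real.sin (θ / 2) ^ n * (sphericalCodeMax (n + 1) θ : ℝ)) := by
  classical
  have hsh : 0 < Real.sin (θ/2) :=
    Real.sin_pos_of_pos_of_lt_pi (by linarith) (by linarith [Real.pi_pos])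
  set r : ℝ := 1 / Real.sin (θ/2) with hrdef
  have hr : 0 < r := by positivity
  set A := sphericalCodeMax (n+1) θ with hAdef
  set v1 := volume (closedBall (0 : EuclideanSpace ℝ (Fin n)) 1) with hv1
  have hv10 : v1 ≠ 0 :=
    ((measure_ball_pos volume _ one_pos).trans_le (measure_mono ball_subset_closedBall)).ne'
  have hv1t : v1 ≠ ⊤ := measure_closedBall_lt_top.ne
  set c : ℝ := Real.sin (θ/2)^n * (A : ℝ) with hc
  have hsin_r : Real.sin (θ/2) = 1/r := by rw [hrdef]; field_simp
  have hfr : Module.finrank ℝ (EuclideanSpace ℝ (Fin n)) = n := finrank_euclideanSpace_fin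
  have hvol : ∀ s : ℝ, 0 ≤ s →
      volume (closedBall (0 : EuclideanSpace ℝ (Fin n)) s) = ENNReal.ofReal (s^n) * v1 := by
    intro s hs
    rw [hv1, Measure.addHaar_closedBall' volume _ hs, hfr]
  have hev : ∀ R : ℝ, 1 ≤ R →
      volume ((⋃ x ∈ P, closedBall x 1) ∩ closedBall (0 : EuclideanSpace ℝ (Fin n)) R) /
        volume (closedBall (0 : EuclideanSpace ℝ (Fin n)) R)
        ≤ ENNReal.ofReal (c * ((R+1+r)/R)^n) := by
    intro R hR
    have hR0 : (0:ℝ) < R := by linarith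
    have hfin := P_inter_finite n hθ1 hθ2 P hP (R+1)
    set Fs := hfin.toFinset with hFs
    have hsub : (⋃ x ∈ P, closedBall x 1) ∩ closedBall (0 : EuclideanSpace ℝ (Fin n)) R ⊆
        ⋃ x ∈ Fs, closedBall x 1 := by
      rintro y ⟨hyU, hyR⟩
      simp only [Set.mem_iUnion] at hyU ⊢
      obtain ⟨x, hxP, hyx⟩ := hyU
      refine ⟨x, ?_, hyx⟩
      rw [hFs, Set.Finite.mem_toFinset]
      refine ⟨hxP, ?_⟩
      rw [mem_closedBall] at hyx hyR ⊢
      calc dist x 0 ≤ dist x y + dist y 0 := dist_triangle _ _ _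
        _ ≤ 1 + R := by rw [dist_comm x y]; linarith
        _ = R + 1 := by ring
    have h2 : volume ((⋃ x ∈ P, closedBall x 1) ∩ closedBall (0 : EuclideanSpace ℝ (Fin n)) R) ≤
        (Fs.card : ℝ≥0∞) * v1 := by
      calc volume ((⋃ x ∈ P, closedBall x 1) ∩ closedBall (0 : EuclideanSpace ℝ (Fin n)) R)
          ≤ volume (⋃ x ∈ Fs, closedBall x 1) := measure_mono hsub
        _ ≤ ∑ x ∈ Fs, volume (closedBall x 1) := measure_biUnion_finset_le _ _
        _ = (Fs.card : ℝ≥0∞) * v1 := by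
            rw [Finset.sum_congr rfl
              (fun x _ => Measure.addHaar_closedBall_center volume x _),
              Finset.sum_const, nsmul_eq_mul]
    have h3 := count_bound n hθ1 hθ2 Fs
      (fun x hx y hy => hP x ((Set.Finite.mem_toFinset hfin).1 hx).1
        y ((Set.Finite.mem_toFinset hfin).1 hy).1)
      (fun x hx => mem_closedBall.1 ((Set.Finite.mem_toFinset hfin).1 hx).2)
    have h4 : (Fs.card : ℝ≥0∞) ≤ ENNReal.ofReal ((A:ℝ) * (R+1+r)^n / r^n) := by
      rw [hvol r hr.le, hvol ((R+1) + r) (by linarith)] at h3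
      rw [← mul_assoc, ← mul_assoc] at h3
      have h5 := (ENNReal.mul_le_mul_iff_left hv10 hv1t).1 h3
      have h6 : (Fs.card : ℝ≥0∞) ≤
          (A : ℝ≥0∞) * ENNReal.ofReal (((R+1) + r)^n) / ENNReal.ofReal (r^n) :=
        (ENNReal.le_div_iff_mul_le (Or.inl (by simp [ENNReal.ofReal_eq_zero]; positivity))
          (Or.inl ENNReal.ofReal_ne_top)).2 h5
      refine h6.trans_eq ?_
      rw [← ENNReal.ofReal_natCast A, ← ENNReal.ofReal_mul (by positivity),
        ← ENNReal.ofReal_div_of_pos (by positivity)]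
    rw [ENNReal.div_le_iff_le_mul
      (Or.inl (by rw [hvol R (by linarith)]; exact mul_ne_zero (a := ENNReal.ofReal (R^n)) (b := v1) (by simp [ENNReal.ofReal_eq_zero]; positivity) (hv10)))
      (Or.inl measure_closedBall_lt_top.ne)]
    calc volume ((⋃ x ∈ P, closedBall x 1) ∩ closedBall (0 : EuclideanSpace ℝ (Fin n)) R)
        ≤ (Fs.card : ℝ≥0∞) * v1 := h2
      _ ≤ ENNReal.ofReal ((A:ℝ) * (R+1+r)^n / r^n) * v1 := mul_le_mul_left h4 v1
      _ = ENNReal.ofReal (c * ((R+1+r)/R)^n) *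
          volume (closedBall (0 : EuclideanSpace ℝ (Fin n)) R) := by
          rw [hvol R (by linarith), ← mul_assoc, ← ENNReal.ofReal_mul (by positivity)]
          congr 2
          rw [hc, hsin_r]
          have hX : ((R+1+r)/R)^n * R^n = (R+1+r)^n := by
            rw [div_pow]; exact div_mul_cancel₀ _ (pow_ne_zero n hR0.ne')
          rw [mul_assoc, hX]
          ring
  have hg : Filter.Tendsto (fun R : ℝ => ENNReal.ofReal (c * ((R+1+r)/R)^n)) Filter.atTop
      (nhds (ENNReal.ofReal c)) := by
    have h1 : Filter.Tendsto (fun R : ℝ => (R+1+r)/R) Filter.atTop (nhds 1) := by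
      have h2 : Filter.Tendsto (fun R : ℝ => 1 + (1+r)/R) Filter.atTop (nhds (1 + 0)) :=
        tendsto_const_nhds.add (tendsto_const_nhds.div_atTop Filter.tendsto_id)
      rw [add_zero] at h2
      refine h2.congr' ?_
      filter_upwards [Filter.eventually_gt_atTop 0] with R hR
      field_simp
      ring
    have h3 : Filter.Tendsto (fun R : ℝ => c * ((R+1+r)/R)^n) Filter.atTop (nhds (c * 1^n)) :=
      tendsto_const_nhds.mul (h1.pow n)
    rw [one_pow, mul_one] at h3
    exact (ENNReal.continuous_ofReal.tendsto _).comp h3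
  rw [packingUpperDensity]
  calc Filter.limsup (fun R : ℝ =>
      volume ((⋃ x ∈ P, closedBall x 1) ∩ closedBall (0 : EuclideanSpace ℝ (Fin n)) R) /
        volume (closedBall (0 : EuclideanSpace ℝ (Fin n)) R)) Filter.atTop
      ≤ Filter.limsup (fun R : ℝ => ENNReal.ofReal (c * ((R+1+r)/R)^n)) Filter.atTop :=
        Filter.limsup_le_limsup (Filter.eventually_atTop.2 ⟨1, hev⟩)
    _ = ENNReal.ofReal c := hg.limsup_eq
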